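/- If B is a Lyndon word and B = AC with A, C nonempty, then AB < BA in lexicographic order (as words of equal length). -/
import Mathlib

/-- A Lyndon word is strictly smaller than each of its proper nontrivial rotations. -/
def Lyndon {α : Type*} [LinearOrder α] (W : List α) : Prop :=
  W ≠ [] ∧ ∀ U V : List α, U ≠ [] → V ≠ [] → W = U ++ V → W < V ++ U

lemma append_lt_append_left' {α : Type*} [LinearOrder α] (u x y : List α) (h : x < y) :
    u ++ x < u ++ y := by
  induction u with
  | nil => exact h
  | cons a t ih =>
    simp only [List.cons_append, List.lt_iff_lex_lt] at *
    exact List.Lex.cons ih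

theorem stmt18 {α : Type*} [LinearOrder α] (A B C : List α)
    (hB : Lyndon B) (hA : A ≠ []) (hC : C ≠ []) (hdecomp : B = A ++ C) :
    A ++ B < B ++ A := by
  have h := hB.2 A C hA hC hdecomp
  have : B ++ A = A ++ (C ++ A) := by rw [hdecomp]; simp
  rw [this]
  exact append_lt_append_left' A B (C ++ A) h
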